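/- Let I be a finite set of items with a size function s : I → ℝ such that every item has a size in (1/4, 1]. Let P and Q be packings of I into bins of capacity 1 such that every nonempty bin of P and every nonempty bin of Q has one of the types BL, BS, B, LLS, LL, LSS, SSS. Assume P is BL-thorough: for all items b of class B and l of class L with s(b) + s(l) ≤ 1, the bin of b in P is of type BL or the bin of l in P is of type BL. Then N_P(BL) + N_Q(LSS) ≥ 2 * (N_P(LLS) + N_P(LL) - N_Q(LLS) - N_Q(LL)). -/

import Mathlib

open Classical

/-- The set of items that packing `P` assigns to bin `b`. -/
noncomputable def binOf {ι β : Type*} [Fintype ι] (P : ι → β) (b : β) : Finset ι :=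
  Finset.univ.filter (fun i => P i = b)

/-- `P` is a valid packing into bins of capacity 1. -/
def IsPacking {ι β : Type*} [Fintype ι] (s : ι → ℝ) (P : ι → β) : Prop :=
  ∀ b : β, ∑ i ∈ binOf P b, s i ≤ 1

/-- A `B` (big) item has size in `(1/2, 1]`. -/
def isB {ι : Type*} (s : ι → ℝ) (i : ι) : Prop := 1 / 2 < s i ∧ s i ≤ 1

/-- An `L` (large) item has size in `(1/3, 1/2]`. -/
def isL {ι : Type*} (s : ι → ℝ) (i : ι) : Prop := 1 / 3 < s i ∧ s i ≤ 1 / 2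

/-- An `S` (small) item has size in `(1/4, 1/3]`. -/
def isS {ι : Type*} (s : ι → ℝ) (i : ι) : Prop := 1 / 4 < s i ∧ s i ≤ 1 / 3

/-- Bin `b` of packing `P` contains exactly `nb` items of class `B`, `nl` of class `L`,
`ns` of class `S` and nothing else. -/
noncomputable def BinHasType {ι β : Type*} [Fintype ι] (s : ι → ℝ) (P : ι → β) (b : β)
    (nb nl ns : ℕ) : Prop :=
  ((binOf P b).filter (fun i => isB s i)).card = nb ∧
  ((binOf P b).filter (fun i => isL s i)).card = nl ∧
  ((binOf P b).filter (fun i => isS s i)).card = ns ∧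
  (binOf P b).card = nb + nl + ns

/-- Number of bins of packing `P` containing exactly `nb` `B` items, `nl` `L` items and
`ns` `S` items (and nothing else). -/
noncomputable def numBins {ι β : Type*} [Fintype ι] [DecidableEq β] (s : ι → ℝ)
    (P : ι → β) (nb nl ns : ℕ) : ℕ :=
  ((Finset.univ.image P).filter (fun b => BinHasType s P b nb nl ns)).card

lemma countL {ι β : Type*} [Fintype ι] [DecidableEq β] (s : ι → ℝ) (R : ι → β)
    (hR : ∀ b : β, (∃ i, R i = b) →
      BinHasType s R b 1 1 0 ∨ BinHasType s R b 1 0 1 ∨ BinHasType s R b 1 0 0 ∨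
      BinHasType s R b 0 2 1 ∨ BinHasType s R b 0 2 0 ∨ BinHasType s R b 0 1 2 ∨
      BinHasType s R b 0 0 3) :
    (Finset.univ.filter (fun i => isL s i)).card =
      numBins s R 1 1 0 + 2 * numBins s R 0 2 1 + 2 * numBins s R 0 2 0
        + numBins s R 0 1 2 := by
  have hcov : Finset.univ.filter (fun i => isL s i) =
      (Finset.univ.image R).biUnion (fun b => (binOf R b).filter (fun i => isL s i)) := by
    ext i
    constructor
    · intro hi
      refine Finset.mem_biUnion.mpr ⟨R i, Finset.mem_image_of_mem R (Finset.mem_univ i), ?_⟩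
      rw [Finset.mem_filter] at hi ⊢
      refine ⟨?_, hi.2⟩
      simp [binOf]
    · intro hi
      rw [Finset.mem_biUnion] at hi
      obtain ⟨b, -, hb⟩ := hi
      rw [Finset.mem_filter] at hb ⊢
      exact ⟨Finset.mem_univ i, hb.2⟩
  have hdisj : ∀ x ∈ Finset.univ.image R, ∀ y ∈ Finset.univ.image R, x ≠ y →
      Disjoint ((binOf R x).filter (fun i => isL s i)) ((binOf R y).filter (fun i => isL s i)) := by
    intro x _ y _ hxy
    refine Finset.disjoint_left.mpr ?_
    intro i hix hiy
    have h1 : R i = x := by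
      have := (Finset.mem_filter.mp hix).1
      simpa [binOf] using this
    have h2 : R i = y := by
      have := (Finset.mem_filter.mp hiy).1
      simpa [binOf] using this
    exact hxy (h1.symm.trans h2)
  have hsum : (Finset.univ.filter (fun i => isL s i)).card
      = ∑ b ∈ Finset.univ.image R, ((binOf R b).filter (fun i => isL s i)).card := by
    rw [hcov, Finset.card_biUnion hdisj]
  have hu : ∀ {b : β} {a1 a2 a3 c1 c2 c3 : ℕ}, BinHasType s R b a1 a2 a3 →
      BinHasType s R b c1 c2 c3 → a1 = c1 ∧ a2 = c2 ∧ a3 = c3 :=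
    fun h h' => ⟨h.1.symm.trans h'.1, h.2.1.symm.trans h'.2.1, h.2.2.1.symm.trans h'.2.2.1⟩
  have key : ∀ b ∈ Finset.univ.image R, ((binOf R b).filter (fun i => isL s i)).card
      = (if BinHasType s R b 1 1 0 then 1 else 0)
        + 2 * (if BinHasType s R b 0 2 1 then 1 else 0)
        + 2 * (if BinHasType s R b 0 2 0 then 1 else 0)
        + (if BinHasType s R b 0 1 2 then 1 else 0) := by
    intro b hb
    rw [Finset.mem_image] at hb
    obtain ⟨i, -, hi⟩ := hb
    rcases hR b ⟨i, hi⟩ with h|h|h|h|h|h|h <;>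
      rw [h.2.1] <;> split_ifs <;>
      (try rfl) <;> (simp only [BinHasType] at *; omega)
  rw [hsum, Finset.sum_congr rfl key]
  simp only [Finset.sum_add_distrib, ← Finset.mul_sum, ← Finset.card_filter]
  rfl

lemma BL_bound {ι β γ : Type*} [Fintype ι] [DecidableEq β] [DecidableEq γ]
    (s : ι → ℝ) (hs : ∀ i, 1 / 4 < s i ∧ s i ≤ 1)
    (P : ι → β) (Q : ι → γ) (hQ : IsPacking s Q)
    (hBLthorough : ∀ bi li : ι, isB s bi → isL s li → s bi + s li ≤ 1 →
      BinHasType s P (P bi) 1 1 0 ∨ BinHasType s P (P li) 1 1 0) :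
    numBins s Q 1 1 0 ≤ 2 * numBins s P 1 1 0 := by
  cases isEmpty_or_nonempty ι with
  | inl h =>
    simp [numBins, Finset.univ_eq_empty]
  | inr h =>
    set AQ := (Finset.univ.image Q).filter (fun c => BinHasType s Q c 1 1 0) with hAQ
    set AP := (Finset.univ.image P).filter (fun b => BinHasType s P b 1 1 0) with hAP
    have hex : ∀ c ∈ AQ, ∃ w : ι, Q w = c ∧ BinHasType s P (P w) 1 1 0 := by
      intro c hc
      rw [hAQ, Finset.mem_filter] at hc
      obtain ⟨-, hB, hL, -, -⟩ := hc
      obtain ⟨bi, hbi⟩ := Finset.card_eq_one.mp hB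
      obtain ⟨li, hli⟩ := Finset.card_eq_one.mp hL
      have hbim : bi ∈ (binOf Q c).filter (fun i => isB s i) := by rw [hbi]; exact Finset.mem_singleton_self bi
      have hlim : li ∈ (binOf Q c).filter (fun i => isL s i) := by rw [hli]; exact Finset.mem_singleton_self li
      simp only [Finset.mem_filter, binOf, Finset.mem_univ, true_and] at hbim hlim
      obtain ⟨hQb, hbB⟩ := hbim
      obtain ⟨hQl, hlL⟩ := hlim
      have hne : bi ≠ li := by
        intro e; rw [e] at hbB
        exact absurd hlL.2 (not_le.mpr (by linarith [hbB.1]))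
      have hfit : s bi + s li ≤ 1 := by
        have hsub : ({bi, li} : Finset ι) ⊆ binOf Q c := by
          intro x hx
          simp only [Finset.mem_insert, Finset.mem_singleton] at hx
          rcases hx with rfl | rfl <;> simp [binOf, hQb, hQl]
        have := Finset.sum_le_sum_of_subset_of_nonneg hsub
          (fun i _ _ => le_of_lt (lt_trans (by norm_num) (hs i).1))
        rw [Finset.sum_pair hne] at this
        exact this.trans (hQ c)
      rcases hBLthorough bi li hbB hlL hfit with h' | h'
      · exact ⟨bi, hQb, h'⟩
      · exact ⟨li, hQl, h'⟩
    set W : γ → ι := fun c =>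
      if h : ∃ w : ι, Q w = c ∧ BinHasType s P (P w) 1 1 0 then h.choose
      else Classical.arbitrary ι with hWdef
    have hW : ∀ c ∈ AQ, Q (W c) = c ∧ BinHasType s P (P (W c)) 1 1 0 := by
      intro c hc
      have hx := hex c hc
      simp only [hWdef, dif_pos hx]
      exact hx.choose_spec
    have hmaps : ∀ c ∈ AQ, P (W c) ∈ AP := by
      intro c hc
      rw [hAP, Finset.mem_filter]
      exact ⟨Finset.mem_image_of_mem P (Finset.mem_univ _), (hW c hc).2⟩
    have hfib : ∀ T ∈ AP, (AQ.filter (fun c => P (W c) = T)).card ≤ 2 := by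
      intro T hT
      rw [hAP, Finset.mem_filter] at hT
      have hT2 : (binOf P T).card = 2 := hT.2.2.2.2
      calc (AQ.filter (fun c => P (W c) = T)).card ≤ (binOf P T).card := by
            apply Finset.card_le_card_of_injOn W
            · intro c hc
              rw [Finset.mem_coe, Finset.mem_filter] at hc
              simp [binOf, hc.2]
            · intro c1 hc1 c2 hc2 he
              rw [Finset.coe_filter, Set.mem_setOf_eq] at hc1 hc2
              rw [← (hW c1 hc1.1).1, ← (hW c2 hc2.1).1, he]
        _ = 2 := hT2
    have := Finset.card_le_mul_card_image_of_maps_to hmaps 2 hfib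
    exact this

/-- Lemma 7 of the paper (`N_P(BL) + N_Q(LSS) ≥ 2 (N_P(LLS) + N_P(LL) - N_Q(LLS) - N_Q(LL))`). -/
theorem boundL {ι β γ : Type*} [Fintype ι] [DecidableEq β] [DecidableEq γ]
    (s : ι → ℝ) (hs : ∀ i, 1 / 4 < s i ∧ s i ≤ 1)
    (P : ι → β) (Q : ι → γ)
    (hP : IsPacking s P) (hQ : IsPacking s Q)
    (hPtypes : ∀ b : β, (∃ i, P i = b) →
      BinHasType s P b 1 1 0 ∨ BinHasType s P b 1 0 1 ∨ BinHasType s P b 1 0 0 ∨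
      BinHasType s P b 0 2 1 ∨ BinHasType s P b 0 2 0 ∨ BinHasType s P b 0 1 2 ∨
      BinHasType s P b 0 0 3)
    (hQtypes : ∀ b : γ, (∃ i, Q i = b) →
      BinHasType s Q b 1 1 0 ∨ BinHasType s Q b 1 0 1 ∨ BinHasType s Q b 1 0 0 ∨
      BinHasType s Q b 0 2 1 ∨ BinHasType s Q b 0 2 0 ∨ BinHasType s Q b 0 1 2 ∨
      BinHasType s Q b 0 0 3)
    (hBLthorough : ∀ bi li : ι, isB s bi → isL s li → s bi + s li ≤ 1 →
      BinHasType s P (P bi) 1 1 0 ∨ BinHasType s P (P li) 1 1 0) :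
    (numBins s P 1 1 0 : ℤ) + numBins s Q 0 1 2 ≥
      2 * ((numBins s P 0 2 1 : ℤ) + numBins s P 0 2 0
            - numBins s Q 0 2 1 - numBins s Q 0 2 0) := by
  have h1 := countL s P hPtypes
  have h2 := countL s Q hQtypes
  have h3 := BL_bound s hs P Q hQ hBLthorough
  omega
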